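/- For 0 ≤ α ≤ 1, the double integral over the triangle {0 < u < t < 1} of [(α ∨ t) - (α ∧ u)]^{-1} du dt equals 1 - α ln α - (1 - α) ln(1 - α), where 0 ln 0 := 0, ∨ denotes maximum, and ∧ denotes minimum. -/

import Mathlib

open MeasureTheory Set intervalIntegral

lemma myIntLog {a : ℝ} (h0 : 0 ≤ a) (h1 : a ≤ 1) :
    IntervalIntegrable Real.log volume 0 a := by
  rcases eq_or_lt_of_le h0 with rfl | ha
  · exact IntervalIntegrable.refl
  rw [intervalIntegrable_iff_integrableOn_Ioc_of_le h0]
  have hcont : ContinuousOn (fun x : ℝ => x - x * Real.log x) (Icc 0 a) :=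
    (continuous_id.sub Real.continuous_mul_log).continuousOn
  have hderiv : ∀ x ∈ Ioo (0:ℝ) a,
      HasDerivAt (fun x : ℝ => x - x * Real.log x) (-Real.log x) x := by
    intro x hx
    have := (hasDerivAt_id x).sub (Real.hasDerivAt_mul_log hx.1.ne')
    exact this.congr_deriv (by ring)
  have hpos : ∀ x ∈ Ioo (0:ℝ) a, 0 ≤ -Real.log x := by
    intro x hx
    simpa using Real.log_nonpos hx.1.le (hx.2.le.trans h1)
  have := integrableOn_deriv_of_nonneg hcont hderiv hpos
  have h2 : IntegrableOn (fun x => -(-Real.log x)) (Ioc 0 a) volume := this.neg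
  simpa using h2

lemma myIntegralLog {a : ℝ} (h0 : 0 ≤ a) (h1 : a ≤ 1) :
    ∫ x in (0:ℝ)..a, Real.log x = a * Real.log a - a := by
  rcases eq_or_lt_of_le h0 with rfl | ha
  · simp
  have hderiv : ∀ x ∈ Ioo (0:ℝ) a,
      HasDerivAt (fun x : ℝ => x * Real.log x - x) (Real.log x) x := by
    intro x hx
    have := (Real.hasDerivAt_mul_log hx.1.ne').sub (hasDerivAt_id x)
    exact this.congr_deriv (by ring)
  have htends0 : Filter.Tendsto (fun x : ℝ => x * Real.log x - x)
      (nhdsWithin 0 (Ioi 0)) (nhds 0) := by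
    have h3 : Filter.Tendsto (fun x : ℝ => x * Real.log x - x) (nhds 0)
        (nhds (0 * Real.log 0 - 0)) :=
      (Real.continuous_mul_log.sub continuous_id).tendsto 0
    simpa using h3.mono_left nhdsWithin_le_nhds
  have htendsa : Filter.Tendsto (fun x : ℝ => x * Real.log x - x)
      (nhdsWithin a (Iio a)) (nhds (a * Real.log a - a)) := by
    exact (((Real.continuous_mul_log.sub continuous_id).tendsto a).mono_left
      nhdsWithin_le_nhds : _)
  have := integral_eq_sub_of_hasDerivAt_of_tendsto ha hderiv (myIntLog h0 h1)
    htends0 htendsa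
  simpa using this

/-- `∫ x in b..c, (d - x)⁻¹ = log (d - b) - log (d - c)` when `b ≤ c < d`. -/
lemma myIntegralInv {b c d : ℝ} (hbc : b ≤ c) (hcd : c < d) :
    ∫ x in b..c, (d - x)⁻¹ = Real.log (d - b) - Real.log (d - c) := by
  rw [integral_comp_sub_left (fun x => x⁻¹) d]
  rw [integral_inv]
  · rw [Real.log_div (by linarith) (by linarith)]
  · intro h
    rw [uIcc_of_le (by linarith)] at h
    have := h.1; linarith

lemma myAeUnion {x y z : ℝ} (h1 : x ≤ y) (h2 : y ≤ z) :
    (Ioo x z : Set ℝ) =ᵐ[volume] ((Ioo x y ∪ Ioo y z : Set ℝ)) := by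
  rw [MeasureTheory.ae_eq_set]
  constructor
  · refine measure_mono_null (fun w hw => ?_) (measure_singleton y)
    simp only [mem_diff, mem_Ioo, mem_union, not_or, not_and, not_lt] at hw
    obtain ⟨⟨hxw, hwz⟩, hu1, hu2⟩ := hw
    rcases lt_trichotomy w y with h | h | h
    · exact absurd (hu1 hxw) (not_le.2 h)
    · exact h
    · exact absurd (hu2 h) (not_le.2 hwz)
  · have : (Ioo x y ∪ Ioo y z) \ Ioo x z = ∅ := by
      rw [diff_eq_empty]
      exact union_subset (Ioo_subset_Ioo_right h2) (Ioo_subset_Ioo_left h1)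
    rw [this, measure_empty]

lemma myDisjoint {x y z : ℝ} : Disjoint (Ioo x y) (Ioo y z) :=
  Set.disjoint_left.2 fun w hw hw' => absurd hw'.1 (not_lt.2 hw.2.le)

/-- Inner integral, region `0 < t < α`. -/
lemma myInner1 {α t : ℝ} (ht : 0 < t) (htα : t < α) :
    ∫ u in Ioo (0 : ℝ) t, (max α t - min α u)⁻¹
      = Real.log α - Real.log (α - t) := by
  have heq : EqOn (fun u => (max α t - min α u)⁻¹) (fun u => (α - u)⁻¹) (Ioo 0 t) := by
    intro u hu
    simp only [max_eq_left htα.le, min_eq_right (hu.2.le.trans htα.le)]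
  rw [setIntegral_congr_fun measurableSet_Ioo heq, ← integral_Ioc_eq_integral_Ioo,
    ← intervalIntegral.integral_of_le ht.le]
  simpa using myIntegralInv ht.le htα

/-- Inner integral, region `0 ≤ α < t`. -/
lemma myInner2 {α t : ℝ} (h0 : 0 ≤ α) (hαt : α < t) :
    ∫ u in Ioo (0 : ℝ) t, (max α t - min α u)⁻¹
      = 1 + (Real.log t - Real.log (t - α)) := by
  rw [setIntegral_congr_set (myAeUnion h0 hαt.le)]
  have hcont : ContinuousOn (fun u : ℝ => (t - u)⁻¹) (Icc 0 α) := by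
    apply ContinuousOn.inv₀ (continuous_const.sub continuous_id).continuousOn
    intro u hu
    have := hu.2
    intro h; simp at h; linarith
  have hint1 : IntegrableOn (fun u => (max α t - min α u)⁻¹) (Ioo 0 α) volume := by
    apply ((hcont.integrableOn_Icc).mono_set Ioo_subset_Icc_self).congr_fun ?_
      measurableSet_Ioo
    intro u hu
    simp only [max_eq_right hαt.le, min_eq_right hu.2.le]
  have hint2 : IntegrableOn (fun u => (max α t - min α u)⁻¹) (Ioo α t) volume := by
    have hc : IntegrableOn (fun _ : ℝ => (t - α)⁻¹) (Ioo α t) volume :=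
      integrableOn_const measure_Ioo_lt_top.ne
    refine hc.congr_fun (fun u hu => ?_) measurableSet_Ioo
    simp only [max_eq_right hαt.le, min_eq_left hu.1.le]
  rw [setIntegral_union myDisjoint measurableSet_Ioo hint1 hint2]
  have hv1 : ∫ u in Ioo (0:ℝ) α, (max α t - min α u)⁻¹
      = Real.log t - Real.log (t - α) := by
    have heq : EqOn (fun u => (max α t - min α u)⁻¹) (fun u => (t - u)⁻¹) (Ioo 0 α) := by
      intro u hu
      simp only [max_eq_right hαt.le, min_eq_right hu.2.le]
    rw [setIntegral_congr_fun measurableSet_Ioo heq, ← integral_Ioc_eq_integral_Ioo,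
      ← intervalIntegral.integral_of_le h0]
    simpa using myIntegralInv h0 hαt
  have hv2 : ∫ u in Ioo α t, (max α t - min α u)⁻¹ = 1 := by
    have heq : EqOn (fun u => (max α t - min α u)⁻¹)
        (fun _ => (t - α)⁻¹) (Ioo α t) := by
      intro u hu
      simp only [max_eq_right hαt.le, min_eq_left hu.1.le]
    rw [setIntegral_congr_fun measurableSet_Ioo heq, setIntegral_const,
      Real.volume_real_Ioo_of_le hαt.le, smul_eq_mul]
    exact mul_inv_cancel₀ (sub_ne_zero.2 hαt.ne')
  rw [hv1, hv2]; ring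

/-- For `0 ≤ α ≤ 1`, the integral over the triangle `{0 < u < t < 1}` of
`[(α ∨ t) - (α ∧ u)]⁻¹` equals `1 - α ln α - (1-α) ln(1-α)` (with `0 ln 0 := 0`,
as is the convention of `Real.log`). -/
theorem stmt_7 (α : ℝ) (h0 : 0 ≤ α) (h1 : α ≤ 1) :
    ∫ t in Ioo (0 : ℝ) 1, ∫ u in Ioo (0 : ℝ) t, (max α t - min α u)⁻¹
      = 1 - α * Real.log α - (1 - α) * Real.log (1 - α) := by
  have h2 : IntervalIntegrable (fun t : ℝ => Real.log (α - t)) volume 0 α := by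
    have := ((myIntLog h0 h1).comp_sub_left α)
    simpa using this.symm
  have hlog1 : IntervalIntegrable Real.log volume α 1 := by
    apply (myIntLog zero_le_one le_rfl).mono_set
    rw [uIcc_of_le h1, uIcc_of_le zero_le_one]
    exact Icc_subset_Icc h0 le_rfl
  have hlog2 : IntervalIntegrable (fun t : ℝ => Real.log (t - α)) volume α 1 := by
    have := (myIntLog (by linarith : (0:ℝ) ≤ 1 - α) (by linarith)).comp_sub_right α
    simpa using this
  have hg1 : IntegrableOn (fun t => Real.log α - Real.log (α - t)) (Ioo 0 α) volume :=
    (intervalIntegrable_iff_integrableOn_Ioo_of_le h0).1 (intervalIntegrable_const.sub h2)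
  have hg2 : IntegrableOn (fun t => 1 + (Real.log t - Real.log (t - α)))
      (Ioo α 1) volume :=
    (intervalIntegrable_iff_integrableOn_Ioo_of_le h1).1
      (intervalIntegrable_const.add (hlog1.sub hlog2))
  have hF1 : IntegrableOn (fun t => ∫ u in Ioo (0:ℝ) t, (max α t - min α u)⁻¹)
      (Ioo 0 α) volume :=
    hg1.congr_fun (fun t ht => (myInner1 ht.1 ht.2).symm) measurableSet_Ioo
  have hF2 : IntegrableOn (fun t => ∫ u in Ioo (0:ℝ) t, (max α t - min α u)⁻¹)
      (Ioo α 1) volume :=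
    hg2.congr_fun (fun t ht => (myInner2 h0 ht.1).symm) measurableSet_Ioo
  rw [setIntegral_congr_set (myAeUnion h0 h1),
    setIntegral_union myDisjoint measurableSet_Ioo hF1 hF2]
  have v1 : ∫ t in Ioo (0:ℝ) α, ∫ u in Ioo (0:ℝ) t, (max α t - min α u)⁻¹ = α := by
    rw [setIntegral_congr_fun measurableSet_Ioo (fun t ht => myInner1 ht.1 ht.2),
      ← integral_Ioc_eq_integral_Ioo, ← intervalIntegral.integral_of_le h0,
      intervalIntegral.integral_sub intervalIntegrable_const h2,
      intervalIntegral.integral_const,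
      intervalIntegral.integral_comp_sub_left Real.log α]
    simp only [sub_zero, sub_self, smul_eq_mul]
    rw [myIntegralLog h0 h1]; ring
  have v2 : ∫ t in Ioo α 1, ∫ u in Ioo (0:ℝ) t, (max α t - min α u)⁻¹
      = 1 - α - α * Real.log α - (1 - α) * Real.log (1 - α) := by
    rw [setIntegral_congr_fun measurableSet_Ioo (fun t ht => myInner2 h0 ht.1),
      ← integral_Ioc_eq_integral_Ioo, ← intervalIntegral.integral_of_le h1,
      intervalIntegral.integral_add intervalIntegrable_const (hlog1.sub hlog2),
      intervalIntegral.integral_const,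
      intervalIntegral.integral_sub hlog1 hlog2,
      intervalIntegral.integral_comp_sub_right Real.log α]
    have e1 : ∫ t in α..1, Real.log t = -1 - (α * Real.log α - α) := by
      rw [← intervalIntegral.integral_interval_sub_left
        (myIntLog zero_le_one le_rfl) (myIntLog h0 h1),
        myIntegralLog zero_le_one le_rfl, myIntegralLog h0 h1, Real.log_one]
      ring
    have e2 : ∫ x in (α - α)..(1 - α), Real.log x
        = (1 - α) * Real.log (1 - α) - (1 - α) := by
      rw [sub_self]
      exact myIntegralLog (by linarith) (by linarith)
    rw [e1, e2, smul_eq_mul]; ring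
  rw [v1, v2]; ring
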